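/- Let N ≥ 2 be an integer, p ≥ 2 real, 0 < r₀ < R₀ ≤ ∞, and let V be a continuous potential on [r₀,R₀) such that either V(r) > 0 for all r or V ≡ 0. Let u be a positive strictly monotone C² radial subsolution and v a positive strictly monotone C² radial supersolution of −Δ_p u − V|u|^{p−2}u = 0 on [r₀,R₀). Then at least one of the following holds: (i) (u/v)'(r) ≤ 0 for all r ∈ [r₀,R₀); or (ii) there exists ρ* ∈ [r₀,R₀) such that (u/v)'(r) ≥ 0 for all r ∈ [ρ*,R₀). -/

import Mathlib

open Topology Filter Set


/-- The ordinary differential operator `L u (r) = (p-1) u''(r) + ((N-1)/r) u'(r)`,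
so that for a radial function the p-Laplacian is `Δ_p u = |u'(r)|^{p-2} L u (r)`. -/
noncomputable def Lrad (N : ℕ) (p : ℝ) (u : ℝ → ℝ) (r : ℝ) : ℝ :=
  (p - 1) * deriv (deriv u) r + (((N : ℝ) - 1) / r) * deriv u r

private lemma psi_nonneg_eq {p : ℝ} (hp : 2 ≤ p) {t : ℝ} (ht : 0 ≤ t) :
    |t| ^ (p - 2) * t = t ^ (p - 1) := by
  rcases eq_or_lt_of_le ht with h | h
  · rw [← h]
    simp [Real.zero_rpow (by linarith : p - 1 ≠ 0)]
  · rw [abs_of_pos h, show p - 1 = (p - 2) + 1 by ring, Real.rpow_add_one h.ne']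

private lemma psi_nonpos_eq {p : ℝ} (hp : 2 ≤ p) {t : ℝ} (ht : t ≤ 0) :
    |t| ^ (p - 2) * t = -((-t) ^ (p - 1)) := by
  have h := psi_nonneg_eq hp (t := -t) (by linarith)
  rw [abs_neg, mul_neg] at h
  linarith

private lemma psi_strictMono {p : ℝ} (hp : 2 ≤ p) :
    StrictMono (fun t : ℝ => |t| ^ (p - 2) * t) := by
  have h1 : (0 : ℝ) < p - 1 := by linarith
  intro a b hab
  simp only
  rcases le_or_gt 0 a with ha | ha
  · rw [psi_nonneg_eq hp ha, psi_nonneg_eq hp (le_trans ha hab.le)]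
    exact Real.rpow_lt_rpow ha hab h1
  · rcases le_or_gt b 0 with hb | hb
    · rw [psi_nonpos_eq hp ha.le, psi_nonpos_eq hp hb]
      have : (-b) ^ (p - 1) < (-a) ^ (p - 1) :=
        Real.rpow_lt_rpow (by linarith) (by linarith) h1
      linarith
    · rw [psi_nonpos_eq hp ha.le, psi_nonneg_eq hp hb.le]
      have h2 : (0:ℝ) < (-a) ^ (p - 1) := Real.rpow_pos_of_pos (by linarith) _
      have h3 : (0:ℝ) < b ^ (p - 1) := Real.rpow_pos_of_pos hb _
      linarith

private lemma psi_div {p : ℝ} (hp : 2 ≤ p) {A U : ℝ} (hU : 0 < U) :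
    |A / U| ^ (p - 2) * (A / U) = (|A| ^ (p - 2) * A) / U ^ (p - 1) := by
  rw [abs_div, abs_of_pos hU, Real.div_rpow (abs_nonneg A) hU.le,
    show p - 1 = (p - 2) + 1 by ring, Real.rpow_add_one hU.ne']
  field_simp

private lemma psi_hasDerivAt {p : ℝ} (hp : 2 ≤ p) {w : ℝ → ℝ} {r : ℝ}
    (hdw2 : DifferentiableAt ℝ (deriv w) r) (hne : deriv w r ≠ 0) :
    HasDerivAt (fun s => |deriv w s| ^ (p - 2) * deriv w s)
      ((p - 1) * |deriv w r| ^ (p - 2) * deriv (deriv w) r) r := by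
  have hc : ContinuousAt (deriv w) r := hdw2.continuousAt
  rcases lt_or_gt_of_ne hne with hA | hA
  · have hev : ∀ᶠ s in 𝓝 r, deriv w s < 0 := hc.eventually (eventually_lt_nhds hA)
    have h1 : HasDerivAt (fun s => -((-(deriv w s)) ^ (p - 1)))
        (-((-(deriv (deriv w) r)) * (p - 1) * (-(deriv w r)) ^ ((p - 1) - 1))) r :=
      ((hdw2.hasDerivAt.neg.rpow_const (Or.inl (by simpa using hne))).neg)
    have h2 := h1.congr_of_eventuallyEq (hev.mono fun s hs => psi_nonpos_eq hp hs.le)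
    refine h2.congr_deriv ?_
    rw [abs_of_neg hA, show p - 1 - 1 = p - 2 by ring]
    ring
  · have hev : ∀ᶠ s in 𝓝 r, 0 < deriv w s := hc.eventually (eventually_gt_nhds hA)
    have h1 : HasDerivAt (fun s => (deriv w s) ^ (p - 1))
        (deriv (deriv w) r * (p - 1) * (deriv w r) ^ ((p - 1) - 1)) r :=
      hdw2.hasDerivAt.rpow_const (Or.inl hne)
    have h2 := h1.congr_of_eventuallyEq (hev.mono fun s hs => psi_nonneg_eq hp hs.le)
    refine h2.congr_deriv ?_
    rw [abs_of_pos hA, show p - 1 - 1 = p - 2 by ring]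
    ring

private lemma hasDerivAt_F (N : ℕ) (hN : 2 ≤ N) {p : ℝ} (hp : 2 ≤ p) {w : ℝ → ℝ} {r : ℝ}
    (hr : 0 < r) (hw : 0 < w r) (hdw : DifferentiableAt ℝ w r)
    (hdw2 : DifferentiableAt ℝ (deriv w) r) (hne : deriv w r ≠ 0) :
    HasDerivAt (fun s => s ^ (N - 1) * (|deriv w s| ^ (p - 2) * deriv w s) / (w s) ^ (p - 1))
      (r ^ (N - 1) * (|deriv w r| ^ (p - 2) * Lrad N p w r) / (w r) ^ (p - 1)
        - (p - 1) * (r ^ (N - 1) * ((|deriv w r| / w r) ^ p))) r := by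
  set A := deriv w r with hA
  set B := deriv (deriv w) r with hB
  set U := w r with hU
  have hpsi := psi_hasDerivAt hp hdw2 hne
  have hnum : HasDerivAt (fun s => s ^ (N - 1) * (|deriv w s| ^ (p - 2) * deriv w s))
      ((↑(N - 1) * r ^ (N - 1 - 1)) * (|A| ^ (p - 2) * A)
        + r ^ (N - 1) * ((p - 1) * |A| ^ (p - 2) * B)) r :=
    (hasDerivAt_pow (N - 1) r).mul hpsi
  have hden : HasDerivAt (fun s => (w s) ^ (p - 1)) (A * (p - 1) * U ^ ((p - 1) - 1)) r :=
    hdw.hasDerivAt.rpow_const (Or.inl hw.ne')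
  have hUP : (0:ℝ) < U ^ (p - 1) := Real.rpow_pos_of_pos hw _
  have hdiv := hnum.div hden hUP.ne'
  refine hdiv.congr_deriv ?_
  have hAne : |A| ≠ 0 := abs_ne_zero.2 hne
  have e1 : U ^ (p - 1) = U ^ (p - 2) * U := by
    rw [← Real.rpow_add_one hw.ne' (p - 2)]; ring_nf
  have e2 : U ^ p = U ^ (p - 1) * U := by
    rw [← Real.rpow_add_one hw.ne' (p - 1)]; ring_nf
  have e3 : |A| ^ p = |A| ^ (p - 2) * (A * A) := by
    have h1 := Real.rpow_add_one hAne (p - 2)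
    have h2 := Real.rpow_add_one hAne (p - 1)
    calc |A| ^ p = |A| ^ ((p - 1) + 1) := by ring_nf
    _ = |A| ^ (p - 1) * |A| := h2
    _ = |A| ^ ((p - 2) + 1) * |A| := by ring_nf
    _ = |A| ^ (p - 2) * |A| * |A| := by rw [h1]
    _ = |A| ^ (p - 2) * (A * A) := by rw [mul_assoc, abs_mul_abs_self]
  have e4 : r ^ (N - 1) = r ^ (N - 2) * r := by
    rw [show N - 1 = (N - 2) + 1 by omega, pow_succ]
  have e5 : (↑(N - 1) : ℝ) = (N : ℝ) - 1 := by
    rw [Nat.cast_sub (by omega)]; norm_num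
  have e6 : N - 1 - 1 = N - 2 := by omega
  have e7 : (|A| / U) ^ p = |A| ^ p / U ^ p := Real.div_rpow (abs_nonneg A) hw.le p
  simp only [← hA, ← hB, ← hU]
  rw [e7, show p - 1 - 1 = p - 2 by ring, e6, e5, Lrad, ← hA, ← hB, e2, e3, e4, e1]
  have hr' : r ≠ 0 := hr.ne'
  have hUne : U ≠ 0 := hw.ne'
  have hUPne : U ^ (p - 1) ≠ 0 := hUP.ne'
  have hUP2ne : U ^ (p - 2) ≠ 0 := (Real.rpow_pos_of_pos hw _).ne'
  field_simp
  ring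

/-- For `p ≥ 2` and a potential `V` which is either everywhere positive or identically
zero, the quotient `u/v` of a positive strictly monotone radial subsolution and a
positive strictly monotone radial supersolution is either non-increasing on all of
`[r₀, R₀)` or eventually non-decreasing. -/
theorem quotient_monotonicity_dichotomy (N : ℕ) (hN : 2 ≤ N) (p : ℝ) (hp : 2 ≤ p)
    (r₀ : ℝ) (R₀ : EReal) (hr₀ : 0 < r₀) (hR : (r₀ : EReal) < R₀)
    (V u v : ℝ → ℝ)
    (hVcont : ContinuousOn V {r : ℝ | r₀ ≤ r ∧ (r : EReal) < R₀})
    (hVsign : (∀ r : ℝ, r₀ ≤ r → (r : EReal) < R₀ → 0 < V r) ∨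
              (∀ r : ℝ, r₀ ≤ r → (r : EReal) < R₀ → V r = 0))
    (huC2 : ContDiffOn ℝ 2 u {r : ℝ | r₀ ≤ r ∧ (r : EReal) < R₀})
    (hvC2 : ContDiffOn ℝ 2 v {r : ℝ | r₀ ≤ r ∧ (r : EReal) < R₀})
    (hu0 : ∀ r : ℝ, r₀ ≤ r → (r : EReal) < R₀ → 0 < u r)
    (hv0 : ∀ r : ℝ, r₀ ≤ r → (r : EReal) < R₀ → 0 < v r)
    (humono : (∀ r : ℝ, r₀ ≤ r → (r : EReal) < R₀ → deriv u r < 0) ∨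
              (∀ r : ℝ, r₀ ≤ r → (r : EReal) < R₀ → 0 < deriv u r))
    (hvmono : (∀ r : ℝ, r₀ ≤ r → (r : EReal) < R₀ → deriv v r < 0) ∨
              (∀ r : ℝ, r₀ ≤ r → (r : EReal) < R₀ → 0 < deriv v r))
    (husub : ∀ r : ℝ, r₀ ≤ r → (r : EReal) < R₀ →
      -(|deriv u r| ^ (p - 2) * Lrad N p u r) - V r * (|u r| ^ (p - 2) * u r) ≤ 0)
    (hvsup : ∀ r : ℝ, r₀ ≤ r → (r : EReal) < R₀ →
      0 ≤ -(|deriv v r| ^ (p - 2) * Lrad N p v r) - V r * (|v r| ^ (p - 2) * v r)) :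
    (∀ r : ℝ, r₀ ≤ r → (r : EReal) < R₀ → deriv (fun s => u s / v s) r ≤ 0) ∨
    (∃ ρ : ℝ, r₀ ≤ ρ ∧ (ρ : EReal) < R₀ ∧
      ∀ r : ℝ, ρ ≤ r → (r : EReal) < R₀ → 0 ≤ deriv (fun s => u s / v s) r) := by
  classical
  set S : Set ℝ := {r : ℝ | r₀ ≤ r ∧ (r : EReal) < R₀} with hSdef
  have hSsub : ∀ {x y : ℝ}, x ∈ S → r₀ ≤ y → y ≤ x → y ∈ S := fun hx hy hyx =>
    ⟨hy, lt_of_le_of_lt (EReal.coe_le_coe_iff.2 hyx) hx.2⟩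
  have hconv : Convex ℝ S := by
    rw [convex_iff_ordConnected]
    exact ⟨fun x hx y hy z hz =>
      ⟨le_trans hx.1 hz.1, lt_of_le_of_lt (EReal.coe_le_coe_iff.2 hz.2) hy.2⟩⟩
  have hOopen : IsOpen {r : ℝ | (r : EReal) < R₀} := isOpen_Iio.preimage continuous_coe_real_ereal
  have hSnhds : ∀ {r : ℝ}, r ∈ S → r₀ < r → S ∈ 𝓝 r := by
    intro r hr hrr
    have hEq : S = Set.Ici r₀ ∩ {r : ℝ | (r : EReal) < R₀} := rfl
    rw [hEq]
    exact Filter.inter_mem (Ici_mem_nhds hrr) (hOopen.mem_nhds hr.2)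
  obtain ⟨r₁, hr01, hr1R⟩ := EReal.exists_between_coe_real hR
  have hr01' : r₀ < r₁ := EReal.coe_lt_coe_iff.1 hr01
  have hint : (interior S).Nonempty :=
    ⟨r₁, mem_interior_iff_mem_nhds.2 (hSnhds ⟨hr01'.le, hr1R⟩ hr01')⟩
  have hUD : UniqueDiffOn ℝ S := uniqueDiffOn_convex hconv hint
  have hneu : ∀ r ∈ S, deriv u r ≠ 0 := by
    intro r hr; rcases humono with h | h
    · exact (h r hr.1 hr.2).ne
    · exact (h r hr.1 hr.2).ne'
  have hnev : ∀ r ∈ S, deriv v r ≠ 0 := by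
    intro r hr; rcases hvmono with h | h
    · exact (h r hr.1 hr.2).ne
    · exact (h r hr.1 hr.2).ne'
  have master : ∀ w : ℝ → ℝ, ContDiffOn ℝ 2 w S → (∀ r ∈ S, deriv w r ≠ 0) →
      (∀ r ∈ S, DifferentiableAt ℝ w r) ∧ ContinuousOn (deriv w) S ∧
      (∀ r ∈ S, r₀ < r → DifferentiableAt ℝ (deriv w) r) := by
    intro w hC2 hne
    have hdiff : ∀ r ∈ S, DifferentiableAt ℝ w r := by
      intro r hr
      by_contra h
      exact hne r hr (deriv_zero_of_not_differentiableAt h)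
    have heq : ∀ r ∈ S, derivWithin w S r = deriv w r := fun r hr =>
      (hdiff r hr).derivWithin (hUD r hr)
    have hC1 : ContDiffOn ℝ 1 (derivWithin w S) S := hC2.derivWithin hUD (by norm_num)
    refine ⟨hdiff, (hC1.continuousOn).congr fun r hr => (heq r hr).symm, ?_⟩
    intro r hr hrr
    have hmem := hSnhds hr hrr
    have h1 : DifferentiableAt ℝ (derivWithin w S) r :=
      ((hC1.differentiableOn one_ne_zero) r hr).differentiableAt hmem
    have h2 : deriv w =ᶠ[𝓝 r] derivWithin w S :=
      Filter.eventuallyEq_of_mem hmem fun s hs => (heq s hs).symm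
    exact h1.congr_of_eventuallyEq h2
  obtain ⟨hdu, hcdu, hd2u⟩ := master u huC2 hneu
  obtain ⟨hdv, hcdv, hd2v⟩ := master v hvC2 hnev
  have hq : ∀ r ∈ S, deriv (fun s => u s / v s) r
      = (u r / v r) * (deriv u r / u r - deriv v r / v r) := by
    intro r hr
    have hu' : u r ≠ 0 := (hu0 r hr.1 hr.2).ne'
    have hv' : v r ≠ 0 := (hv0 r hr.1 hr.2).ne'
    show deriv (u / v) r = _
    rw [((hdu r hr).hasDerivAt.div (hdv r hr).hasDerivAt hv').deriv]
    field_simp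
  have hqpos : ∀ r ∈ S, (0 ≤ deriv (fun s => u s / v s) r ↔
      deriv v r / v r ≤ deriv u r / u r) := by
    intro r hr
    rw [hq r hr, mul_nonneg_iff_of_pos_left (div_pos (hu0 r hr.1 hr.2) (hv0 r hr.1 hr.2)),
      sub_nonneg]
  have hqpos' : ∀ r ∈ S, (0 < deriv (fun s => u s / v s) r ↔
      deriv v r / v r < deriv u r / u r) := by
    intro r hr
    rw [hq r hr, mul_pos_iff_of_pos_left (div_pos (hu0 r hr.1 hr.2) (hv0 r hr.1 hr.2)),
      sub_pos]
  set F : ℝ → ℝ := fun s => s ^ (N - 1) * (|deriv u s| ^ (p - 2) * deriv u s) / (u s) ^ (p - 1)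
      - s ^ (N - 1) * (|deriv v s| ^ (p - 2) * deriv v s) / (v s) ^ (p - 1) with hFdef
  have hFeq : ∀ r ∈ S, F r = r ^ (N - 1) *
      ((|deriv u r / u r| ^ (p - 2) * (deriv u r / u r))
        - (|deriv v r / v r| ^ (p - 2) * (deriv v r / v r))) := by
    intro r hr
    rw [hFdef]
    simp only
    rw [psi_div hp (hu0 r hr.1 hr.2), psi_div hp (hv0 r hr.1 hr.2)]
    ring
  have hpow : ∀ r ∈ S, (0:ℝ) < r ^ (N - 1) := fun r hr =>
    pow_pos (lt_of_lt_of_le hr₀ hr.1) _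
  have hFpos : ∀ r ∈ S, (0 ≤ F r ↔ deriv v r / v r ≤ deriv u r / u r) := by
    intro r hr
    rw [hFeq r hr, mul_nonneg_iff_of_pos_left (hpow r hr), sub_nonneg]
    exact (psi_strictMono hp).le_iff_le
  have hFpos' : ∀ r ∈ S, (0 < F r ↔ deriv v r / v r < deriv u r / u r) := by
    intro r hr
    rw [hFeq r hr, mul_pos_iff_of_pos_left (hpow r hr), sub_pos]
    exact (psi_strictMono hp).lt_iff_lt
  have hFcont : ContinuousOn F S := by
    have hcu : ContinuousOn u S := huC2.continuousOn
    have hcv : ContinuousOn v S := hvC2.continuousOn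
    have h1 : ContinuousOn (fun s : ℝ => s ^ (N - 1)) S := (continuous_pow _).continuousOn
    have hnu : ContinuousOn (fun s => |deriv u s| ^ (p - 2) * deriv u s) S :=
      (hcdu.abs.rpow_const fun r hr => Or.inl (abs_ne_zero.2 (hneu r hr))).mul hcdu
    have hnv : ContinuousOn (fun s => |deriv v s| ^ (p - 2) * deriv v s) S :=
      (hcdv.abs.rpow_const fun r hr => Or.inl (abs_ne_zero.2 (hnev r hr))).mul hcdv
    have hduden : ContinuousOn (fun s => (u s) ^ (p - 1)) S :=
      hcu.rpow_const fun r hr => Or.inl (hu0 r hr.1 hr.2).ne'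
    have hdvden : ContinuousOn (fun s => (v s) ^ (p - 1)) S :=
      hcv.rpow_const fun r hr => Or.inl (hv0 r hr.1 hr.2).ne'
    exact ((h1.mul hnu).div hduden fun r hr =>
        (Real.rpow_pos_of_pos (hu0 r hr.1 hr.2) _).ne').sub
      ((h1.mul hnv).div hdvden fun r hr =>
        (Real.rpow_pos_of_pos (hv0 r hr.1 hr.2) _).ne')
  have hFkey : ∀ r ∈ S, r₀ < r → DifferentiableAt ℝ F r ∧
      ((|deriv u r| / u r) ^ p ≤ (|deriv v r| / v r) ^ p → 0 ≤ deriv F r) := by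
    intro r hr hrr
    have hrpos : (0:ℝ) < r := lt_trans hr₀ hrr
    have hU : 0 < u r := hu0 r hr.1 hr.2
    have hV : 0 < v r := hv0 r hr.1 hr.2
    have h1 := hasDerivAt_F N hN hp hrpos hU (hdu r hr) (hd2u r hr hrr) (hneu r hr)
    have h2 := hasDerivAt_F N hN hp hrpos hV (hdv r hr) (hd2v r hr hrr) (hnev r hr)
    have hF' := h1.sub h2
    refine ⟨hF'.differentiableAt, ?_⟩
    intro hle
    rw [show deriv F r = _ from hF'.deriv]
    have hUP : (0:ℝ) < (u r) ^ (p - 1) := Real.rpow_pos_of_pos hU _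
    have hVP : (0:ℝ) < (v r) ^ (p - 1) := Real.rpow_pos_of_pos hV _
    have hub : -(V r * (u r) ^ (p - 1)) ≤ |deriv u r| ^ (p - 2) * Lrad N p u r := by
      have h := husub r hr.1 hr.2
      rw [show |u r| ^ (p - 2) * u r = (u r) ^ (p - 1) from psi_nonneg_eq hp hU.le] at h
      linarith
    have hvb : |deriv v r| ^ (p - 2) * Lrad N p v r ≤ -(V r * (v r) ^ (p - 1)) := by
      have h := hvsup r hr.1 hr.2
      rw [show |v r| ^ (p - 2) * v r = (v r) ^ (p - 1) from psi_nonneg_eq hp hV.le] at h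
      linarith
    have t1 : -(r ^ (N - 1) * V r) ≤
        r ^ (N - 1) * (|deriv u r| ^ (p - 2) * Lrad N p u r) / (u r) ^ (p - 1) := by
      have h := mul_le_mul_of_nonneg_left hub (pow_nonneg hrpos.le (N - 1))
      have h2 := (div_le_div_iff_of_pos_right hUP).2 h
      calc -(r ^ (N - 1) * V r)
          = r ^ (N - 1) * -(V r * (u r) ^ (p - 1)) / (u r) ^ (p - 1) := by
            field_simp
        _ ≤ _ := h2
    have t2 : r ^ (N - 1) * (|deriv v r| ^ (p - 2) * Lrad N p v r) / (v r) ^ (p - 1) ≤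
        -(r ^ (N - 1) * V r) := by
      have h := mul_le_mul_of_nonneg_left hvb (pow_nonneg hrpos.le (N - 1))
      have h2 := (div_le_div_iff_of_pos_right hVP).2 h
      calc r ^ (N - 1) * (|deriv v r| ^ (p - 2) * Lrad N p v r) / (v r) ^ (p - 1) ≤
          r ^ (N - 1) * -(V r * (v r) ^ (p - 1)) / (v r) ^ (p - 1) := h2
        _ = -(r ^ (N - 1) * V r) := by field_simp
    have t3 : (p - 1) * (r ^ (N - 1) * ((|deriv u r| / u r) ^ p)) ≤
        (p - 1) * (r ^ (N - 1) * ((|deriv v r| / v r) ^ p)) := by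
      apply mul_le_mul_of_nonneg_left _ (by linarith : (0:ℝ) ≤ p - 1)
      exact mul_le_mul_of_nonneg_left hle (pow_nonneg hrpos.le _)
    linarith
  -- четыре случая
  rcases humono with hu' | hu'
  · rcases hvmono with hv' | hv'
    · -- both decreasing
      rcases Classical.em (∀ r : ℝ, r₀ ≤ r → (r : EReal) < R₀ →
          deriv (fun s => u s / v s) r ≤ 0) with hA | hA
      · exact Or.inl hA
      right
      push_neg at hA
      obtain ⟨ρ, hρ1, hρ2, hρ3⟩ := hA
      have hρS : ρ ∈ S := ⟨hρ1, hρ2⟩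
      have hFρ : 0 < F ρ := (hFpos' ρ hρS).2 ((hqpos' ρ hρS).1 hρ3)
      refine ⟨ρ, hρ1, hρ2, ?_⟩
      intro r hρr hrR
      have hrS : r ∈ S := ⟨le_trans hρ1 hρr, hrR⟩
      suffices h : 0 ≤ F r from (hqpos r hrS).2 ((hFpos r hrS).1 h)
      by_contra hneg
      push_neg at hneg
      have hρltr : ρ < r := by
        rcases lt_or_eq_of_le hρr with h | h
        · exact h
        · rw [← h] at hneg; linarith
      have hIccS : Set.Icc ρ r ⊆ S := fun t ht => hSsub hrS (le_trans hρ1 ht.1) ht.2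
      set T : Set ℝ := Set.Icc ρ r ∩ F ⁻¹' Set.Iic 0 with hTdef
      have hTc : IsClosed T :=
        (hFcont.mono hIccS).preimage_isClosed_of_isClosed isClosed_Icc isClosed_Iic
      have hTcomp : IsCompact T := isCompact_Icc.of_isClosed_subset hTc Set.inter_subset_left
      have hrT : r ∈ T := ⟨⟨hρr, le_refl r⟩, hneg.le⟩
      set s := sInf T with hsdef
      have hsT : s ∈ T := hTcomp.sInf_mem ⟨r, hrT⟩
      have hsIcc : s ∈ Set.Icc ρ r := hsT.1
      have hsF : F s ≤ 0 := hsT.2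
      have hρs : ρ < s := lt_of_le_of_ne hsIcc.1 (by intro h; rw [← h] at hsF; linarith)
      have hclaim : ∀ t ∈ Set.Ico ρ s, 0 < F t := by
        intro t ht
        by_contra h
        push_neg at h
        have htT : t ∈ T := ⟨⟨ht.1, le_trans ht.2.le hsIcc.2⟩, h⟩
        exact absurd (csInf_le hTcomp.bddBelow htT) (not_le.2 ht.2)
      have hmono : MonotoneOn F (Set.Icc ρ s) := by
        apply monotoneOn_of_deriv_nonneg (convex_Icc ρ s)
          (hFcont.mono fun t ht => hIccS ⟨ht.1, le_trans ht.2 hsIcc.2⟩)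
        · intro x hx
          rw [interior_Icc] at hx
          have hxS : x ∈ S := hIccS ⟨hx.1.le, le_trans hx.2.le hsIcc.2⟩
          exact ((hFkey x hxS (lt_of_le_of_lt hρ1 hx.1)).1).differentiableWithinAt
        · intro x hx
          rw [interior_Icc] at hx
          have hxS : x ∈ S := hIccS ⟨hx.1.le, le_trans hx.2.le hsIcc.2⟩
          apply (hFkey x hxS (lt_of_le_of_lt hρ1 hx.1)).2
          have hFx : 0 < F x := hclaim x ⟨hx.1.le, hx.2⟩
          have hab : deriv v x / v x < deriv u x / u x := (hFpos' x hxS).1 hFx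
          have hau : deriv u x < 0 := hu' x hxS.1 hxS.2
          have hav : deriv v x < 0 := hv' x hxS.1 hxS.2
          have e1 : |deriv u x| / u x = -(deriv u x / u x) := by
            rw [abs_of_neg hau, neg_div]
          have e2 : |deriv v x| / v x = -(deriv v x / v x) := by
            rw [abs_of_neg hav, neg_div]
          rw [e1, e2]
          have ha0 : deriv u x / u x < 0 := div_neg_of_neg_of_pos hau (hu0 x hxS.1 hxS.2)
          exact Real.rpow_le_rpow (by linarith) (by linarith) (by linarith)
      have := hmono ⟨le_refl ρ, hρs.le⟩ ⟨hρs.le, le_refl s⟩ hρs.le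
      linarith
    · -- u decreasing, v increasing: quotient decreasing everywhere
      left
      intro r hr1 hr2
      have hrS : r ∈ S := ⟨hr1, hr2⟩
      rw [hq r hrS]
      have h1 : deriv u r / u r < 0 :=
        div_neg_of_neg_of_pos (hu' r hr1 hr2) (hu0 r hr1 hr2)
      have h2 : 0 < deriv v r / v r := div_pos (hv' r hr1 hr2) (hv0 r hr1 hr2)
      have h3 : 0 < u r / v r := div_pos (hu0 r hr1 hr2) (hv0 r hr1 hr2)
      nlinarith
  · rcases hvmono with hv' | hv'
    · -- u increasing, v decreasing: quotient increasing everywhere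
      right
      refine ⟨r₀, le_refl r₀, hR, ?_⟩
      intro r hr1 hr2
      have hrS : r ∈ S := ⟨hr1, hr2⟩
      rw [hq r hrS]
      have h1 : 0 < deriv u r / u r := div_pos (hu' r hr1 hr2) (hu0 r hr1 hr2)
      have h2 : deriv v r / v r < 0 :=
        div_neg_of_neg_of_pos (hv' r hr1 hr2) (hv0 r hr1 hr2)
      have h3 : 0 < u r / v r := div_pos (hu0 r hr1 hr2) (hv0 r hr1 hr2)
      nlinarith
    · -- both increasing
      rcases Classical.em (∀ r : ℝ, r₀ ≤ r → (r : EReal) < R₀ →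
          deriv (fun s => u s / v s) r ≤ 0) with hA | hA
      · exact Or.inl hA
      right
      push_neg at hA
      obtain ⟨ρ, hρ1, hρ2, hρ3⟩ := hA
      have hρS : ρ ∈ S := ⟨hρ1, hρ2⟩
      have hFρ : 0 < F ρ := (hFpos' ρ hρS).2 ((hqpos' ρ hρS).1 hρ3)
      refine ⟨ρ, hρ1, hρ2, ?_⟩
      intro r hρr hrR
      have hrS : r ∈ S := ⟨le_trans hρ1 hρr, hrR⟩
      suffices h : 0 ≤ F r from (hqpos r hrS).2 ((hFpos r hrS).1 h)
      by_contra hneg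
      push_neg at hneg
      have hIccS : Set.Icc ρ r ⊆ S := fun t ht => hSsub hrS (le_trans hρ1 ht.1) ht.2
      set T : Set ℝ := Set.Icc ρ r ∩ F ⁻¹' Set.Ici 0 with hTdef
      have hTc : IsClosed T :=
        (hFcont.mono hIccS).preimage_isClosed_of_isClosed isClosed_Icc isClosed_Ici
      have hTcomp : IsCompact T := isCompact_Icc.of_isClosed_subset hTc Set.inter_subset_left
      have hρT : ρ ∈ T := ⟨⟨le_refl ρ, hρr⟩, hFρ.le⟩
      set s := sSup T with hsdef
      have hsT : s ∈ T := hTcomp.sSup_mem ⟨ρ, hρT⟩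
      have hsIcc : s ∈ Set.Icc ρ r := hsT.1
      have hsF : (0:ℝ) ≤ F s := hsT.2
      have hsr : s < r := lt_of_le_of_ne hsIcc.2 (by intro h; rw [h] at hsF; linarith)
      have hclaim : ∀ t ∈ Set.Ioc s r, F t < 0 := by
        intro t ht
        by_contra h
        push_neg at h
        have htT : t ∈ T := ⟨⟨le_trans hsIcc.1 ht.1.le, ht.2⟩, h⟩
        exact absurd (le_csSup hTcomp.bddAbove htT) (not_le.2 ht.1)
      have hmono : MonotoneOn F (Set.Icc s r) := by
        apply monotoneOn_of_deriv_nonneg (convex_Icc s r)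
          (hFcont.mono fun t ht => hIccS ⟨le_trans hsIcc.1 ht.1, ht.2⟩)
        · intro x hx
          rw [interior_Icc] at hx
          have hxS : x ∈ S := hIccS ⟨le_trans hsIcc.1 hx.1.le, hx.2.le⟩
          exact ((hFkey x hxS (lt_of_le_of_lt (le_trans hρ1 hsIcc.1) hx.1)).1).differentiableWithinAt
        · intro x hx
          rw [interior_Icc] at hx
          have hxS : x ∈ S := hIccS ⟨le_trans hsIcc.1 hx.1.le, hx.2.le⟩
          apply (hFkey x hxS (lt_of_le_of_lt (le_trans hρ1 hsIcc.1) hx.1)).2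
          have hFx : F x < 0 := hclaim x ⟨hx.1, hx.2.le⟩
          have hab : deriv u x / u x < deriv v x / v x := by
            by_contra hc
            push_neg at hc
            exact absurd ((hFpos x hxS).2 hc) (not_le.2 hFx)
          have hau : 0 < deriv u x := hu' x hxS.1 hxS.2
          have hav : 0 < deriv v x := hv' x hxS.1 hxS.2
          have e1 : |deriv u x| / u x = deriv u x / u x := by rw [abs_of_pos hau]
          have e2 : |deriv v x| / v x = deriv v x / v x := by rw [abs_of_pos hav]
          rw [e1, e2]
          have ha0 : 0 < deriv u x / u x := div_pos hau (hu0 x hxS.1 hxS.2)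
          exact Real.rpow_le_rpow ha0.le hab.le (by linarith)
      have := hmono ⟨le_refl s, hsr.le⟩ ⟨hsr.le, le_refl r⟩ hsr.le
      linarith
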